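/- arXiv:1906.00439 — 2 statements merged into one kernel-verified Lean document; each statement's English description precedes it below -/
import Mathlib

section
/- In a truncated archimedean vector lattice, if f₁, …, f_m are elements of the range of the truncation satisfying f_n = (f_n + f_{n+1})̄ for all n < m, and g = f₁ + ⋯ + f_m, then f_n = (g ⊖ (n−1))̄ for all n ≤ m. -/
set_option linter.unusedSectionVars false
set_option linter.unusedVariables false
set_option maxHeartbeats 1000000


/-- A truncation on a (lattice-ordered real) vector lattice `G`: a unary operation
`trunc` on the positive cone satisfying the axioms (T1)–(T3). -/
structure Truncation (G : Type*) [AddCommGroup G] [Lattice G] [Module ℝ G] where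
  trunc : G → G
  /-- (T1): `g ⊓ h̄ ≤ ḡ ≤ g` for `g, h ≥ 0`. -/
  inf_trunc_le : ∀ g h : G, 0 ≤ g → 0 ≤ h → g ⊓ trunc h ≤ trunc g
  trunc_le_self : ∀ g : G, 0 ≤ g → trunc g ≤ g
  /-- (T2): if `ḡ = 0` then `g = 0`. -/
  eq_zero_of_trunc_eq_zero : ∀ g : G, 0 ≤ g → trunc g = 0 → g = 0
  /-- (T3): if `n g = (n g)‾` for all `n` then `g = 0`. -/
  eq_zero_of_forall_trunc_eq : ∀ g : G, 0 ≤ g →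
    (∀ n : ℕ, (n : ℝ) • g = trunc ((n : ℝ) • g)) → g = 0

namespace Truncation

variable {G : Type*} [AddCommGroup G] [Lattice G] [Module ℝ G]

/-- `g ∧ r := r • (g/r)‾` for real `r > 0` (and `g ∧ 0 := 0`). -/
noncomputable def wedge (T : Truncation G) (g : G) (r : ℝ) : G :=
  r • T.trunc (r⁻¹ • g)

/-- `g ⊖ r := r • ((g/r) - (g/r)‾)` for real `r > 0`, and `g ⊖ 0 := g`. -/
noncomputable def ominus (T : Truncation G) (g : G) (r : ℝ) : G :=
  if r = 0 then g else r • (r⁻¹ • g - T.trunc (r⁻¹ • g))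

end Truncation

section Aux

variable {G : Type*} [AddCommGroup G] [Lattice G] [Module ℝ G]
  [CovariantClass G G (· + ·) (· ≤ ·)]

/-- Riesz-type inequality: `c ⊓ (a + b) ≤ (a ⊓ c) + (b ⊓ c)` for nonnegative elements. -/
private lemma inf_add_le' {a b c : G} (ha : 0 ≤ a) (hb : 0 ≤ b) (hc : 0 ≤ c) :
    c ⊓ (a + b) ≤ (a ⊓ c) + (b ⊓ c) := by
  have h1 : c ⊓ (a + b) ≤ (a ⊓ c) + b := by
    rw [show (a ⊓ c) + b = (a + b) ⊓ (c + b) by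
      rw [add_comm (a ⊓ c) b, add_inf a c b, add_comm b a, add_comm b c]]
    exact le_inf inf_le_right (inf_le_left.trans (le_add_of_nonneg_right hb))
  have h2 : c ⊓ (a + b) ≤ (a ⊓ c) + c :=
    inf_le_left.trans (le_add_of_nonneg_left (le_inf ha hc))
  calc c ⊓ (a + b) ≤ ((a ⊓ c) + b) ⊓ ((a ⊓ c) + c) := le_inf h1 h2
    _ = (a ⊓ c) + (b ⊓ c) := (add_inf b c (a ⊓ c)).symm

private lemma inf_nsmul_eq_zero' {q h : G} (hq : 0 ≤ q) (hh : 0 ≤ h) (he : q ⊓ h = 0) :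
    ∀ k : ℕ, h ⊓ (k • q) = 0 := by
  intro k
  induction k with
  | zero => simpa using inf_eq_right.mpr hh
  | succ k ih =>
    refine le_antisymm ?_ (le_inf hh (nsmul_nonneg hq _))
    calc h ⊓ ((k + 1) • q) = h ⊓ (q + k • q) := by rw [succ_nsmul', add_comm]
      _ ≤ (q ⊓ h) + ((k • q) ⊓ h) := inf_add_le' hq (nsmul_nonneg hq k) hh
      _ ≤ 0 + 0 := add_le_add (le_of_eq he) (le_of_eq (by rw [inf_comm]; exact ih))
      _ = 0 := add_zero 0

private lemma nonneg_of_nsmul_nonneg' {x : G} {n : ℕ} (hn : 0 < n) (h : 0 ≤ n • x) : 0 ≤ x := by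
  have hsub : n • x = n • x⁺ - n • x⁻ := by rw [← nsmul_sub, posPart_sub_negPart]
  have h1 : n • x⁻ ≤ n • x⁺ := by rwa [hsub, sub_nonneg] at h
  have hd1 : x⁻ ⊓ (n • x⁺) = 0 :=
    inf_nsmul_eq_zero' (posPart_nonneg x) (negPart_nonneg x)
      (posPart_inf_negPart_eq_zero x) n
  have hd2 : (n • x⁺) ⊓ (n • x⁻) = 0 :=
    inf_nsmul_eq_zero' (negPart_nonneg x) (nsmul_nonneg (posPart_nonneg x) n) hd1 n
  have h2 : n • x⁻ = 0 := by
    have h5 : (n • x⁺) ⊓ (n • x⁻) = n • x⁻ := inf_eq_right.mpr h1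
    rw [← h5, hd2]
  have h3 : x⁻ ≤ 0 := by
    have h6 : x⁻ ≤ n • x⁻ := by
      obtain ⟨k, rfl⟩ := Nat.exists_eq_succ_of_ne_zero hn.ne'
      rw [succ_nsmul]
      exact le_add_of_nonneg_left (nsmul_nonneg (negPart_nonneg x) k)
    rw [h2] at h6; exact h6
  have h4 : x⁻ = 0 := le_antisymm h3 (negPart_nonneg x)
  calc (0:G) ≤ x⁺ := posPart_nonneg x
    _ = x := by have h5 := posPart_sub_negPart x; rw [h4, sub_zero] at h5; exact h5

/-- Monotonicity of the truncation on the positive cone. -/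
private lemma Truncation.mono' (T : Truncation G) {a b : G} (ha : 0 ≤ a) (hab : a ≤ b) :
    T.trunc a ≤ T.trunc b := by
  have h1 := T.inf_trunc_le b a (ha.trans hab) ha
  rwa [inf_eq_right.mpr ((T.trunc_le_self a ha).trans hab)] at h1

private lemma Truncation.nonneg' (T : Truncation G) (h0 : T.trunc 0 = 0) {a : G} (ha : 0 ≤ a) :
    0 ≤ T.trunc a := h0 ▸ T.mono' le_rfl ha

/-- Idempotence. -/
private lemma Truncation.idem' (T : Truncation G) (h0 : T.trunc 0 = 0) {a : G} (ha : 0 ≤ a) :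
    T.trunc (T.trunc a) = T.trunc a := by
  refine le_antisymm (T.trunc_le_self _ (T.nonneg' h0 ha)) ?_
  have h1 := T.inf_trunc_le (T.trunc a) a (T.nonneg' h0 ha) ha
  rwa [inf_idem] at h1

/-- Elements below a fixed point are fixed points. -/
private lemma Truncation.fix_of_le' (T : Truncation G) {a b : G} (ha : 0 ≤ a)
    (hb : T.trunc b = b) (hab : a ≤ b) : T.trunc a = a := by
  have h1 := T.inf_trunc_le a b ha (ha.trans hab)
  rw [hb, inf_eq_left.mpr hab] at h1
  exact le_antisymm (T.trunc_le_self a ha) h1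

/-- Key identity: `(f + h̄)‾ = (f + h)‾` for `f, h ≥ 0`. -/
private lemma Truncation.trunc_add_trunc' (T : Truncation G) (h0 : T.trunc 0 = 0) {f h : G}
    (hf : 0 ≤ f) (hh : 0 ≤ h) : T.trunc (f + T.trunc h) = T.trunc (f + h) := by
  have hth : 0 ≤ T.trunc h := T.nonneg' h0 hh
  refine le_antisymm
    (T.mono' (add_nonneg hf hth) (add_le_add le_rfl (T.trunc_le_self h hh))) ?_
  have hle : T.trunc (f + h) ≤ f + T.trunc h := by
    have h1 := T.inf_trunc_le h (f + h) hh (add_nonneg hf hh)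
    have h2 : T.trunc (f + h) - f ≤ h ⊓ T.trunc (f + h) := by
      refine le_inf ?_ ?_
      · rw [sub_le_iff_le_add']
        exact T.trunc_le_self _ (add_nonneg hf hh)
      · exact sub_le_self _ hf
    rw [← sub_le_iff_le_add']
    exact h2.trans h1
  have h3 := T.inf_trunc_le (f + T.trunc h) (f + h) (add_nonneg hf hth)
    (add_nonneg hf hh)
  rwa [inf_eq_right.mpr hle] at h3

end Aux

/-- If `f 0, …, f (m-1)` lie in the range of the truncation and satisfy
`f n = (f n + f (n+1))‾` for all `n` with `n + 1 < m`, and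
`g = f 0 + ⋯ + f (m-1)`, then `f n = (g ⊖ n)‾` for all `n < m`. -/
theorem stmt7 {G : Type*} [AddCommGroup G] [Lattice G] [Module ℝ G]
    [CovariantClass G G (· + ·) (· ≤ ·)]
    (arch : ∀ g h : G, 0 ≤ g → (∀ n : ℕ, n • g ≤ h) → g = 0)
    (T : Truncation G) (m : ℕ) (f : ℕ → G)
    (hf_pos : ∀ n, n < m → 0 ≤ f n)
    (hf_trunc : ∀ n, n < m → T.trunc (f n) = f n)
    (hgood : ∀ n, n + 1 < m → f n = T.trunc (f n + f (n + 1)))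
    (g : G) (hg : g = ∑ n ∈ Finset.range m, f n) :
    ∀ n, n < m → f n = T.trunc (T.ominus g n) := by
  intro n hn
  letI : IsOrderedAddMonoid G :=
    { add_le_add_left := fun a b h c => add_le_add h le_rfl }
  have hm : 0 < m := Nat.lt_of_le_of_lt (Nat.zero_le n) hn
  have h0 : T.trunc 0 = 0 := by
    have h1 := T.inf_trunc_le 0 (f 0) le_rfl (hf_pos 0 hm)
    rw [hf_trunc 0 hm, inf_eq_left.mpr (hf_pos 0 hm)] at h1
    exact le_antisymm (T.trunc_le_self 0 le_rfl) h1
  set S : ℕ → G := fun k => ∑ i ∈ Finset.Ico k m, f i with hSdef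
  have hSpos : ∀ k, 0 ≤ S k := by
    intro k
    simp only [hSdef]
    exact Finset.sum_nonneg fun i hi => hf_pos i (Finset.mem_Ico.mp hi).2
  have hSsucc : ∀ k, k < m → S k = f k + S (k + 1) := by
    intro k hk
    simp only [hSdef]
    exact Finset.sum_eq_sum_Ico_succ_bot hk f
  have hgS : g = S 0 := by
    simp only [hSdef]
    rw [hg, Finset.range_eq_Ico]
  have claim2aux : ∀ j k, k < m → m - k ≤ j + 1 → T.trunc (S k) = f k := by
    intro j
    induction j with
    | zero =>
      intro k hk hk2
      have hmk : m = k + 1 := by omega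
      have hSk : S k = f k := by
        simp only [hSdef]
        rw [hmk, Nat.Ico_succ_singleton, Finset.sum_singleton]
      rw [hSk]
      exact hf_trunc k hk
    | succ j ih =>
      intro k hk _
      by_cases hk1 : k + 1 < m
      · rw [hSsucc k hk, ← T.trunc_add_trunc' h0 (hf_pos k hk) (hSpos (k + 1)),
          ih (k + 1) hk1 (by omega)]
        exact (hgood k hk1).symm
      · exact ih k hk (by omega)
  have claim2 : ∀ k, k < m → T.trunc (S k) = f k := fun k hk => claim2aux m k hk (by omega)
  rcases Nat.eq_zero_or_pos n with hn0 | hn1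
  · subst hn0
    have hominus : T.ominus g ((0 : ℕ) : ℝ) = g := by
      simp [Truncation.ominus]
    rw [hominus, hgS, claim2 0 hm]
  · -- main case `1 ≤ n`
    set s : G := ∑ i ∈ Finset.range n, f i with hsdef
    have hgsh : g = s + S n := by
      simp only [hSdef, hsdef]
      rw [hg, Finset.range_eq_Ico, Finset.range_eq_Ico]
      exact (Finset.sum_Ico_consecutive f (Nat.zero_le n) (le_of_lt hn)).symm
    have hadj : ∀ k, k + 1 < m → f (k + 1) ≤ f k := by
      intro k hk
      have h1 := T.inf_trunc_le (f k + f (k + 1)) (f (k + 1))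
        (add_nonneg (hf_pos k (by omega)) (hf_pos (k + 1) hk)) (hf_pos (k + 1) hk)
      rwa [hf_trunc (k + 1) hk,
        inf_eq_right.mpr (le_add_of_nonneg_left (hf_pos k (by omega))),
        ← hgood k hk] at h1
    have hmono : ∀ i j, i ≤ j → j < m → f j ≤ f i := by
      intro i j
      induction j with
      | zero =>
        intro hij _
        rw [Nat.le_zero.mp hij]
      | succ j ihj =>
        intro hij hjm
        by_cases h : i = j + 1
        · rw [h]
        · exact (hadj j hjm).trans (ihj (by omega) (by omega))
    have hnm1 : n - 1 < m := by omega
    have hsub1 : n - 1 + 1 = n := by omega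
    have hs_pos : 0 ≤ s :=
      Finset.sum_nonneg fun i hi => hf_pos i ((Finset.mem_range.mp hi).trans hn)
    have hs_ub : s ≤ n • f 0 := by
      calc s ≤ ∑ _i ∈ Finset.range n, f 0 :=
            Finset.sum_le_sum fun i hi =>
              hmono 0 i (Nat.zero_le i) ((Finset.mem_range.mp hi).trans hn)
        _ = n • f 0 := by rw [Finset.sum_const, Finset.card_range]
    have hs_lb : n • f (n - 1) ≤ s := by
      calc n • f (n - 1) = ∑ _i ∈ Finset.range n, f (n - 1) := by
            rw [Finset.sum_const, Finset.card_range]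
        _ ≤ s := Finset.sum_le_sum fun i hi => hmono i (n - 1) (by
            have := Finset.mem_range.mp hi; omega) hnm1
    have hnR : ((n : ℕ) : ℝ) ≠ 0 := Nat.cast_ne_zero.mpr (by omega)
    set u : G := ((n : ℕ) : ℝ)⁻¹ • g with hudef
    set p : G := T.trunc u with hpdef
    have hcast : ∀ x : G, ((n : ℕ) : ℝ) • x = n • x := fun x => Nat.cast_smul_eq_nsmul ℝ n x
    have hnu : ((n : ℕ) : ℝ) • u = g := smul_inv_smul₀ hnR g
    set t : G := ((n : ℕ) : ℝ)⁻¹ • s with htdef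
    have hnt : ((n : ℕ) : ℝ) • t = s := smul_inv_smul₀ hnR s
    have hnn : ∀ x : G, 0 ≤ n • x → 0 ≤ x := fun x hx =>
      nonneg_of_nsmul_nonneg' hn1 hx
    have ht0 : 0 ≤ t := hnn t (by rw [← hcast, hnt]; exact hs_pos)
    have htf0 : t ≤ f 0 := by
      rw [← sub_nonneg]
      refine hnn _ ?_
      rw [nsmul_sub, ← hcast t, hnt]
      exact sub_nonneg.mpr hs_ub
    have hg0 : 0 ≤ g := by rw [hgS]; exact hSpos 0
    have hu0 : 0 ≤ u := hnn u (by rw [← hcast, hnu]; exact hg0)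
    have htu : t ≤ u := by
      rw [← sub_nonneg]
      refine hnn _ ?_
      rw [nsmul_sub, ← hcast u, ← hcast t, hnu, hnt, hgsh, add_sub_cancel_left]
      exact hSpos n
    have htfix : T.trunc t = t := T.fix_of_le' ht0 (hf_trunc 0 hm) htf0
    have htp : t ≤ p := by rw [hpdef, ← htfix]; exact T.mono' ht0 htu
    have hpu : p ≤ u := T.trunc_le_self u hu0
    have hp0 : 0 ≤ p := T.nonneg' h0 hu0
    have hpfix : T.trunc p = p := T.idem' h0 hu0
    have ha0 : 0 ≤ f (n - 1) := hf_pos _ hnm1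
    have hA : T.trunc (f (n - 1) + S n) = f (n - 1) := by
      rw [← T.trunc_add_trunc' h0 ha0 (hSpos n), claim2 n hn]
      have h1 := hgood (n - 1) (by omega)
      rw [hsub1] at h1
      exact h1.symm
    set q : G := (p - f (n - 1)) ⊔ 0 with hqdef
    have hq0 : 0 ≤ q := le_sup_right
    have hpaq : p - f (n - 1) ≤ q := le_sup_left
    have hh0 : 0 ≤ S n := hSpos n
    have hPfix : T.trunc (p ⊔ f (n - 1)) = p ⊔ f (n - 1) := by
      refine le_antisymm (T.trunc_le_self _ (hp0.trans le_sup_left)) (sup_le ?_ ?_)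
      · have h1 := T.inf_trunc_le (p ⊔ f (n - 1)) p (hp0.trans le_sup_left) hp0
        rwa [hpfix, inf_eq_right.mpr le_sup_left] at h1
      · have h1 := T.inf_trunc_le (p ⊔ f (n - 1)) (f (n - 1)) (hp0.trans le_sup_left) ha0
        rwa [hf_trunc _ hnm1, inf_eq_right.mpr le_sup_right] at h1
    have he : q ⊓ S n = 0 := by
      have hfact : (f (n - 1) + S n) ⊓ (p ⊔ f (n - 1)) ≤ f (n - 1) := by
        have h1 := T.inf_trunc_le (f (n - 1) + S n) (p ⊔ f (n - 1))
          (add_nonneg ha0 hh0) (hp0.trans le_sup_left)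
        rwa [hPfix, hA] at h1
      have h2 : f (n - 1) + (q ⊓ S n) ≤ (f (n - 1) + S n) ⊓ (p ⊔ f (n - 1)) := by
        refine le_inf (add_le_add le_rfl inf_le_right) ?_
        calc f (n - 1) + (q ⊓ S n) ≤ f (n - 1) + q := add_le_add le_rfl inf_le_left
          _ = (f (n - 1) + (p - f (n - 1))) ⊔ (f (n - 1) + 0) :=
              add_sup (p - f (n - 1)) 0 (f (n - 1))
          _ = p ⊔ f (n - 1) := by
              rw [add_zero]
              congr 1
              abel
      have h3 : f (n - 1) + (q ⊓ S n) ≤ f (n - 1) + 0 := by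
        rw [add_zero]; exact h2.trans hfact
      exact le_antisymm (le_of_add_le_add_left h3) (le_inf hq0 hh0)
    have hq_inf : S n ⊓ (n • q) = 0 := inf_nsmul_eq_zero' hq0 hh0 he n
    have hd : ((n : ℕ) : ℝ) • p - s ≤ 0 := by
      have h1 : ((n : ℕ) : ℝ) • p - s ≤ S n := by
        rw [sub_le_iff_le_add, hcast]
        calc n • p ≤ n • u := nsmul_le_nsmul_right hpu n
          _ = g := by rw [← hcast, hnu]
          _ = S n + s := by rw [hgsh, add_comm]
      have h2 : ((n : ℕ) : ℝ) • p - s ≤ n • q := by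
        calc ((n : ℕ) : ℝ) • p - s ≤ ((n : ℕ) : ℝ) • p - n • f (n - 1) :=
              sub_le_sub_left hs_lb _
          _ = n • (p - f (n - 1)) := by rw [hcast, ← nsmul_sub]
          _ ≤ n • q := nsmul_le_nsmul_right hpaq n
      calc ((n : ℕ) : ℝ) • p - s ≤ S n ⊓ (n • q) := le_inf h1 h2
        _ = 0 := hq_inf
    have hpt : p = t := by
      refine le_antisymm ?_ htp
      rw [← sub_nonneg]
      refine hnn _ ?_
      rw [nsmul_sub, ← hcast t, ← hcast p, hnt]
      exact sub_nonneg.mpr (sub_nonpos.mp hd)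
    have hominus : T.ominus g ((n : ℕ) : ℝ) = S n := by
      rw [Truncation.ominus, if_neg hnR, smul_sub, ← hudef, ← hpdef, hnu, hpt, hnt, hgsh,
        add_sub_cancel_left]
    rw [hominus, claim2 n hn]
end

section
/- If u ≥ 0 in R₀L satisfies u = (2u)̄, then u(r, ∞) = u(0, ∞) for all 0 ≤ r < 1, and x := u(0, ∞) is complemented in L with complement u(−∞, 1). -/
open TopologicalSpace

/-- The open lower ray `(-∞, r)` as an open set of `ℝ`. -/
def Oiio (r : ℝ) : Opens ℝ := ⟨Set.Iio r, isOpen_Iio⟩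

/-- The open upper ray `(r, ∞)` as an open set of `ℝ`. -/
def Oioi (r : ℝ) : Opens ℝ := ⟨Set.Ioi r, isOpen_Ioi⟩

/-- The open interval `(r, s)` as an open set of `ℝ`. -/
def Oioo (r s : ℝ) : Opens ℝ := ⟨Set.Ioo r s, isOpen_Ioo⟩

/-- The truncation operation on frame-valued functions on `𝒪ℝ`, induced by the
continuous map `x ↦ x ∧ 1` via `w(f)(V) = ⋁_{w(U) ⊆ V} f(U)`. -/
noncomputable def truncMap {L : Type*} [Order.Frame L] (g : Opens ℝ → L)
    (V : Opens ℝ) : L :=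
  ⨆ U : Opens ℝ, ⨆ _ : (fun x : ℝ => min x 1) '' (U : Set ℝ) ⊆ (V : Set ℝ), g U

/-- The scalar double `2u` of `u ∈ R₀L`, given by `(2u)(U) = u({x | 2x ∈ U})`,
so that `(2u)(r, ∞) = u(r/2, ∞)`. -/
noncomputable def doubleMap {L : Type*} [Order.Frame L] (u : FrameHom (Opens ℝ) L) :
    FrameHom (Opens ℝ) L :=
  u.comp (Opens.comap ⟨fun x : ℝ => 2 * x, by continuity⟩)

open Classical in
/-- The characteristic function `χ_x ∈ R₀L` of a complemented element `x` of `L`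
with complement `y`: `χ_x(U) = ⊤` if `0, 1 ∈ U`; `= x` if `1 ∈ U`, `0 ∉ U`;
`= y` if `0 ∈ U`, `1 ∉ U`; `= ⊥` if `0, 1 ∉ U`. -/
noncomputable def chi {L : Type*} [Order.Frame L] (x y : L) (U : Opens ℝ) : L :=
  if (0 : ℝ) ∈ (U : Set ℝ) then (if (1 : ℝ) ∈ (U : Set ℝ) then ⊤ else y)
  else (if (1 : ℝ) ∈ (U : Set ℝ) then x else ⊥)

/-- The scalar multiple `c • g` of `g ∈ R₀L` for `c > 0`, given by
`(c • g)(U) = g({x | c * x ∈ U})`, so that `(c • g)(r, ∞) = g(r/c, ∞)`. -/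
noncomputable def scaleMap {L : Type*} [Order.Frame L] (c : ℝ)
    (g : FrameHom (Opens ℝ) L) : FrameHom (Opens ℝ) L :=
  g.comp (Opens.comap ⟨fun x : ℝ => c * x, by continuity⟩)

noncomputable def mmap : C(ℝ, ℝ) := ⟨fun x : ℝ => min x 1, by continuity⟩

noncomputable def dmap : C(ℝ, ℝ) := ⟨fun x : ℝ => 2 * x, by continuity⟩

lemma trunc_eq {L : Type*} [Order.Frame L] (g : FrameHom (Opens ℝ) L) (V : Opens ℝ) :
    truncMap (⇑g) V = g (Opens.comap mmap V) := by
  apply le_antisymm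
  · refine iSup_le fun U => iSup_le fun hU => OrderHomClass.mono g ?_
    intro x hx
    show x ∈ (Opens.comap mmap V : Set ℝ)
    rw [Opens.coe_comap]
    exact hU ⟨x, hx, rfl⟩
  · refine le_iSup_of_le (Opens.comap mmap V) (le_iSup_of_le ?_ le_rfl)
    rintro y ⟨x, hx, rfl⟩
    rw [Opens.coe_comap] at hx
    exact hx

lemma doubleMap_apply {L : Type*} [Order.Frame L] (u : FrameHom (Opens ℝ) L)
    (U : Opens ℝ) : doubleMap u U = u (Opens.comap dmap U) := rfl

lemma comap_coe (V : Opens ℝ) :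
    (Opens.comap dmap (Opens.comap mmap V) : Set ℝ)
      = (fun x : ℝ => min (2 * x) 1) ⁻¹' (V : Set ℝ) := by
  rw [Opens.coe_comap, Opens.coe_comap]
  rfl

/-- If `u ≥ 0` in `R₀L` satisfies `u = (2u)‾`, then `u(r, ∞) = u(0, ∞)` for all
`0 ≤ r < 1`, and `x := u(0, ∞)` is complemented in `L` with complement
`u(-∞, 1)`. -/
theorem stmt15 (L : Type*) [Order.Frame L]
    (u : FrameHom (Opens ℝ) L)
    (hpos : u (Oiio 0) = ⊥)
    (hcomp : ∀ U : Opens ℝ, u U = truncMap (doubleMap u) U) :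
    (∀ r : ℝ, 0 ≤ r → r < 1 → u (Oioi r) = u (Oioi 0)) ∧
    u (Oioi 0) ⊔ u (Oiio 1) = ⊤ ∧ u (Oioi 0) ⊓ u (Oiio 1) = ⊥ := by
  have hkey : ∀ V : Opens ℝ, u V = u (Opens.comap dmap (Opens.comap mmap V)) := by
    intro V
    rw [hcomp V, trunc_eq (doubleMap u) V, doubleMap_apply]
  -- halving identity on upper rays
  have h1 : ∀ r : ℝ, r < 1 → u (Oioi r) = u (Oioi (r / 2)) := by
    intro r hr
    rw [hkey (Oioi r)]
    congr 1
    apply Opens.ext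
    rw [comap_coe]
    ext x
    simp only [Oioi, Set.mem_preimage, Opens.coe_mk, Set.mem_Ioi, lt_min_iff]
    constructor
    · rintro ⟨h, -⟩; linarith
    · intro h; exact ⟨by linarith, hr⟩
  -- iterated halving
  have h2 : ∀ r : ℝ, r < 1 → ∀ n : ℕ, u (Oioi r) = u (Oioi (r / 2 ^ n)) := by
    intro r hr n
    induction n with
    | zero => simp
    | succ n ih =>
      have h2n : (1:ℝ) ≤ 2 ^ n := one_le_pow₀ one_le_two
      have hlt : r / 2 ^ n < 1 := by
        rcases le_or_gt r 0 with h | h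
        · have : r / 2 ^ n ≤ 0 := div_nonpos_of_nonpos_of_nonneg h (by positivity)
          linarith
        · have : r / 2 ^ n ≤ r := div_le_self h.le h2n
          linarith
      rw [ih, h1 (r / 2 ^ n) hlt, div_div, ← pow_succ]
  -- main ray lemma
  have hray : ∀ r : ℝ, 0 ≤ r → r < 1 → u (Oioi r) = u (Oioi 0) := by
    intro r hr0 hr1
    rcases eq_or_lt_of_le hr0 with h | h
    · rw [← h]
    · have hsup : Oioi 0 = ⨆ n : ℕ, Oioi (r / 2 ^ n) := by
        apply Opens.ext
        rw [Opens.coe_iSup]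
        ext x
        simp only [Oioi, Opens.coe_mk, Set.mem_Ioi, Set.mem_iUnion]
        constructor
        · intro hx
          obtain ⟨n, hn⟩ := pow_unbounded_of_one_lt (r / x) (one_lt_two (α := ℝ))
          exact ⟨n, by rw [div_lt_iff₀ (by positivity)]; rw [div_lt_iff₀ hx] at hn; linarith⟩
        · rintro ⟨n, hn⟩
          calc (0:ℝ) < r / 2 ^ n := by positivity
            _ < x := hn
      rw [hsup, map_iSup]
      refine le_antisymm ?_ (iSup_le fun n => (h2 r hr1 n).symm.le)
      exact le_iSup_of_le 0 (by rw [← h2 r hr1 0])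
  refine ⟨hray, ?_, ?_⟩
  · rw [← map_sup, ← map_top u]
    congr 1
    apply Opens.ext
    ext x
    simp only [Oioi, Oiio, Opens.coe_sup, Opens.coe_mk, Set.mem_union, Set.mem_Ioi,
      Set.mem_Iio, Opens.coe_top, Set.mem_univ, iff_true]
    rcases lt_or_ge 0 x with h | h
    · exact Or.inl h
    · exact Or.inr (lt_of_le_of_lt h one_pos)
  · -- u(0,∞) ⊓ u(-∞,1) = u(0,1) = u(0,1/2) ≤ u(-∞,1/2) ⊓ u(1/2,∞) = u ⊥ = ⊥
    have hio : u (Oioi 0) ⊓ u (Oiio 1) = u (Oioo 0 1) := by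
      rw [← map_inf]
      congr 1
    have hhalf : u (Oioo 0 1) = u (Oioo 0 (1/2)) := by
      rw [hkey (Oioo 0 1)]
      congr 1
      apply Opens.ext
      rw [comap_coe]
      ext x
      simp only [Oioo, Set.mem_preimage, Opens.coe_mk, Set.mem_Ioo, lt_min_iff, min_lt_iff]
      constructor
      · rintro ⟨⟨h1, -⟩, h2⟩
        rcases h2 with h2 | h2
        · exact ⟨by linarith, by linarith⟩
        · linarith
      · rintro ⟨h1, h2⟩
        exact ⟨⟨by linarith, one_pos⟩, Or.inl (by linarith)⟩
    have hle1 : u (Oioo 0 1) ≤ u (Oiio (1/2)) := by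
      rw [hhalf]
      exact OrderHomClass.mono u (fun x hx => hx.2)
    have hle2 : u (Oioo 0 1) ≤ u (Oioi (1/2)) := by
      rw [hray (1/2) (by norm_num) (by norm_num)]
      exact OrderHomClass.mono u (fun x hx => hx.1)
    refine le_antisymm ?_ bot_le
    rw [hio]
    calc u (Oioo 0 1) ≤ u (Oiio (1/2)) ⊓ u (Oioi (1/2)) := le_inf hle1 hle2
      _ = u (Oiio (1/2) ⊓ Oioi (1/2)) := (map_inf u _ _).symm
      _ = u ⊥ := by
          congr 1
          apply Opens.ext
          ext x
          simp only [Oiio, Oioi, Opens.coe_inf, Opens.coe_mk, Set.mem_inter_iff,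
            Set.mem_Iio, Set.mem_Ioi, Opens.coe_bot, Set.mem_empty_iff_false, iff_false,
            not_and]
          intro h1 h2
          linarith
      _ = ⊥ := map_bot u
end
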